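/- For any directed graph (V, E), the set D_∞ of vertices from which no infinite E-path starts (i.e., there is no sequence w_1, w_2, ... with v E w_1 and w_k E w_{k+1} for all k) is not equal to Out(v) for any vertex v ∈ V. -/

import Mathlib

def OutSet {V : Type*} (E : V → V → Prop) (v : V) : Set V := {w | E v w}

def DiagSet {V : Type*} (E : V → V → Prop) : Set V := {u | ¬ E u u}

/-- `v` lies on an E-cycle `v E w₁ E ⋯ E wₙ E v` (indices 1..n). -/
def HasCycle {V : Type*} (E : V → V → Prop) (v : V) (n : ℕ) : Prop :=
  ∃ w : ℕ → V, E v (w 1) ∧ (∀ i, 1 ≤ i → i < n → E (w i) (w (i+1))) ∧ E (w n) v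

def Dn {V : Type*} (E : V → V → Prop) (n : ℕ) : Set V := {v | ¬ HasCycle E v n}

def Dinf {V : Type*} (E : V → V → Prop) : Set V :=
  {v | ¬ ∃ w : ℕ → V, E v (w 0) ∧ ∀ k, E (w k) (w (k+1))}

def DS {V : Type*} (E : V → V → Prop) (S : Set ℕ) : Set V :=
  {v | (∀ n ∈ S, 0 < n → ¬ HasCycle E v n) ∧ (0 ∈ S → ¬ E v v)}

theorem stmt3 {V : Type*} (E : V → V → Prop) :
    ∀ v : V, Dinf E ≠ OutSet E v := by
  intro v h
  by_cases hv : v ∈ Dinf E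
  · have hEvv : E v v := by rw [h] at hv; exact hv
    exact hv ⟨fun _ => v, hEvv, fun _ => hEvv⟩
  · unfold Dinf at hv
    simp only [Dinf, Set.mem_setOf_eq, not_not] at hv
    obtain ⟨w, h0, hk⟩ := hv
    have : w 0 ∈ Dinf E := by rw [h]; exact h0
    exact this ⟨fun k => w (k+1), hk 0, fun k => hk (k+1)⟩
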